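/- (Proposition 2.) Let a ≥ 0 and δ ≥ 1 be integers with s + δ < T, and let t* ∈ {s + 1, …, T + 1} satisfy f_{(s,a)}(t*) ≤ f_{(s,a)}(t) for all t ∈ {s + 1, …, T + 1}. If t* > s + δ and t* ≤ T, then f_{(s+δ,a+δ)}(t*) ≤ f_{(s+δ,a+δ)}(t) for all t ∈ {s + δ + 1, …, T + 1}; that is, t* also minimizes the expected maintenance cost for the planning period starting at time s + δ with a component of age a + δ. -/

import Mathlib

open MeasureTheory ProbabilityTheory Real

section AuxForProp2

variable {Ω : Type*} [MeasureSpace Ω] [IsProbabilityMeasure (ℙ : Measure Ω)]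

lemma prop2_cut_step (L : Ω → ℕ) (φ : ℕ → ℝ) (K : ℝ) (n : ℕ) :
    (fun ω => if L ω ≤ n + 1 then φ (L ω) else K)
      = fun ω => (if L ω ≤ n then φ (L ω) else K)
        + (L ⁻¹' {n+1}).indicator (fun _ => φ (n+1) - K) ω := by
  funext ω
  by_cases h2 : L ω = n + 1
  · rw [Set.indicator_of_mem (by simp [h2])]
    rw [if_pos (by omega), if_neg (by omega), h2]
    ring
  · rw [Set.indicator_of_notMem (by simp [h2]), add_zero]
    by_cases h1 : L ω ≤ n
    · rw [if_pos (by omega), if_pos h1]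
    · rw [if_neg (by omega), if_neg h1]

lemma prop2_integrable_cut (L : Ω → ℕ) (hL : Measurable L) (hpos : ∀ ω, 1 ≤ L ω)
    (φ : ℕ → ℝ) (K : ℝ) (n : ℕ) :
    Integrable (fun ω => if L ω ≤ n then φ (L ω) else K) ℙ := by
  induction n with
  | zero =>
    have : (fun ω => if L ω ≤ 0 then φ (L ω) else K) = fun _ => K :=
      funext fun ω => if_neg (by have := hpos ω; omega)
    rw [this]; exact integrable_const K
  | succ n ih =>
    rw [prop2_cut_step L φ K n]
    exact ih.add ((integrable_indicator_iff (hL (measurableSet_singleton _))).mpr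
      (integrableOn_const (measure_ne_top _ _)))

lemma prop2_integral_cut (L : Ω → ℕ) (hL : Measurable L) (hpos : ∀ ω, 1 ≤ L ω)
    (S : ℕ → ℝ) (hS : ∀ j, (ℙ {ω | j < L ω}).toReal = S j)
    (φ : ℕ → ℝ) (K : ℝ) (n : ℕ) :
    ∫ ω, (if L ω ≤ n then φ (L ω) else K) ∂ℙ
      = (∑ k ∈ Finset.Ioc 0 n, φ k * (S (k-1) - S k)) + K * S n := by
  induction n with
  | zero =>
    have h0 : (fun ω => if L ω ≤ 0 then φ (L ω) else K) = fun _ => K :=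
      funext fun ω => if_neg (by have := hpos ω; omega)
    have hS0 : S 0 = 1 := by
      rw [← hS 0]
      have huniv : {ω : Ω | 0 < L ω} = Set.univ := by
        ext ω; exact iff_of_true (hpos ω) trivial
      rw [huniv, measure_univ, ENNReal.toReal_one]
    rw [h0, integral_const, measureReal_def, measure_univ, hS0]
    simp
  | succ n ih =>
    have hmeasset : MeasurableSet (L ⁻¹' {n+1}) := hL (measurableSet_singleton _)
    have hsplit : ℙ {ω | n < L ω} = ℙ (L ⁻¹' {n+1}) + ℙ {ω | n+1 < L ω} := by
      have hunion : {ω : Ω | n < L ω} = (L ⁻¹' {n+1}) ∪ {ω | n+1 < L ω} := by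
        ext ω; simp only [Set.mem_setOf_eq, Set.mem_union, Set.mem_preimage,
          Set.mem_singleton_iff]; omega
      rw [hunion, measure_union _ (measurableSet_lt measurable_const hL)]
      rw [Set.disjoint_left]
      intro ω hω hω'
      simp only [Set.mem_preimage, Set.mem_singleton_iff] at hω
      simp only [Set.mem_setOf_eq] at hω'
      omega
    have hPA : (ℙ (L ⁻¹' {n+1})).toReal = S n - S (n+1) := by
      have h1 := hS n
      have h2 := hS (n+1)
      rw [hsplit, ENNReal.toReal_add (measure_ne_top _ _) (measure_ne_top _ _)] at h1
      rw [← h1, ← h2]; ring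
    rw [prop2_cut_step L φ K n,
      integral_add (prop2_integrable_cut L hL hpos φ K n)
        ((integrable_indicator_iff hmeasset).mpr
          (integrableOn_const (measure_ne_top _ _))),
      ih, integral_indicator_const _ hmeasset, smul_eq_mul, measureReal_def, hPA,
      Finset.sum_Ioc_succ_top (Nat.zero_le n)]
    have hnn : (n + 1) - 1 = n := by omega
    rw [hnn]
    ring

end AuxForProp2

/-- Proposition 2: Let `a ≥ 0` and `δ ≥ 1` with `s + δ < T`, and let
`t*` minimize `f_{(s,a)}` over `{s + 1, …, T + 1}`. If `t* > s + δ` and `t* ≤ T`,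
then `t*` also minimizes `f_{(s+δ,a+δ)}` over `{s + δ + 1, …, T + 1}`. -/
theorem minimizer_transfers_to_shifted_problem
    {Ω : Type*} [MeasureSpace Ω] [IsProbabilityMeasure (ℙ : Measure Ω)]
    (θ β g h m : ℝ) (hθ : 0 < θ) (hβ : 1 < β) (hg : 0 ≤ g) (hh : 0 ≤ h) (hm : 0 ≤ m)
    (L : Ω → ℕ) (hmeasL : Measurable L) (hposL : ∀ ω, 1 ≤ L ω)
    (hsurvL : ∀ u : ℕ, ℙ {ω | u < L ω} = ENNReal.ofReal (Real.exp (-θ * (u : ℝ) ^ β)))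
    (q : ℕ → ℝ)
    (hq : ∀ t : ℕ, 1 ≤ t →
      q t = ((1 - Real.exp (-θ * (t : ℝ) ^ β)) * g
            + Real.exp (-θ * (t : ℝ) ^ β) * (h + m * t))
          / ((∑ k ∈ Finset.Icc 1 t,
              (Real.exp (-θ * ((k : ℝ) - 1) ^ β) - Real.exp (-θ * (k : ℝ) ^ β)) * (k : ℝ))
            + Real.exp (-θ * (t : ℝ) ^ β) * (t : ℝ)))
    (c : ℝ) (hc : c = ⨅ t : ℕ, q (t + 1))
    (T s : ℕ) (hT : 1 ≤ T) (hsT : s < T)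
    (a δ : ℕ) (hδ : 1 ≤ δ) (hsδ : s + δ < T)
    -- residual life at age a
    (La : Ω → ℕ) (hmeasLa : Measurable La) (hposLa : ∀ ω, 1 ≤ La ω)
    (hsurvLa : ∀ u : ℕ, ℙ {ω | u < La ω}
      = ENNReal.ofReal (Real.exp (θ * ((a : ℝ) ^ β - ((a : ℝ) + u) ^ β))))
    -- residual life at age a + δ
    (Lad : Ω → ℕ) (hmeasLad : Measurable Lad) (hposLad : ∀ ω, 1 ≤ Lad ω)
    (hsurvLad : ∀ u : ℕ, ℙ {ω | u < Lad ω}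
      = ENNReal.ofReal (Real.exp (θ * (((a + δ : ℕ) : ℝ) ^ β
          - (((a + δ : ℕ) : ℝ) + u) ^ β))))
    -- the cost function Q_{(s,a)} and the objective f_{(s,a)}
    (Qa : ℕ → ℝ → ℝ)
    (hQa : ∀ t : ℕ, s + 1 ≤ t → t ≤ T → ∀ u : ℝ,
      Qa t u = if u ≤ (t : ℝ) then g + ((T : ℝ) - u) * c
              else h + ((t : ℝ) - (s : ℝ) + (a : ℝ)) * m + ((T : ℝ) - (t : ℝ)) * c)
    (hQa' : ∀ u : ℝ,
      Qa (T + 1) u = if u ≤ (T : ℝ) then g + ((T : ℝ) - u) * c else 0)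
    (fa : ℕ → ℝ)
    (hfa : ∀ t : ℕ, fa t = ∫ ω, Qa t ((s : ℝ) + (La ω : ℝ)) ∂ℙ)
    -- the cost function Q_{(s+δ,a+δ)} and the objective f_{(s+δ,a+δ)}
    (Qd : ℕ → ℝ → ℝ)
    (hQd : ∀ t : ℕ, s + δ + 1 ≤ t → t ≤ T → ∀ u : ℝ,
      Qd t u = if u ≤ (t : ℝ) then g + ((T : ℝ) - u) * c
              else h + ((t : ℝ) - ((s : ℝ) + (δ : ℝ)) + ((a : ℝ) + (δ : ℝ))) * m
                    + ((T : ℝ) - (t : ℝ)) * c)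
    (hQd' : ∀ u : ℝ,
      Qd (T + 1) u = if u ≤ (T : ℝ) then g + ((T : ℝ) - u) * c else 0)
    (fd : ℕ → ℝ)
    (hfd : ∀ t : ℕ, fd t = ∫ ω, Qd t (((s : ℝ) + (δ : ℝ)) + (Lad ω : ℝ)) ∂ℙ)
    (tstar : ℕ) (htstar1 : s + 1 ≤ tstar) (htstar2 : tstar ≤ T + 1)
    (hmin : ∀ t : ℕ, s + 1 ≤ t → t ≤ T + 1 → fa tstar ≤ fa t)
    (htstar3 : s + δ < tstar) (htstar4 : tstar ≤ T) :
    ∀ t : ℕ, s + δ + 1 ≤ t → t ≤ T + 1 → fd tstar ≤ fd t := by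
  classical
  -- survival functions
  obtain ⟨Sa, hSa_def⟩ : ∃ Sa : ℕ → ℝ,
      Sa = fun j : ℕ => Real.exp (θ * ((a : ℝ) ^ β - ((a : ℝ) + (j : ℝ)) ^ β)) := ⟨_, rfl⟩
  obtain ⟨Sd, hSd_def⟩ : ∃ Sd : ℕ → ℝ,
      Sd = fun j : ℕ => Real.exp (θ * (((a + δ : ℕ) : ℝ) ^ β - (((a + δ : ℕ) : ℝ) + (j : ℝ)) ^ β)) :=
    ⟨_, rfl⟩
  have hSa : ∀ j, (ℙ {ω | j < La ω}).toReal = Sa j := fun j => by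
    simp only [hSa_def]
    rw [hsurvLa j, ENNReal.toReal_ofReal (Real.exp_nonneg _)]
  have hSd : ∀ j, (ℙ {ω | j < Lad ω}).toReal = Sd j := fun j => by
    simp only [hSd_def]
    rw [hsurvLad j, ENNReal.toReal_ofReal (Real.exp_nonneg _)]
  obtain ⟨ρ, hρ_def⟩ : ∃ ρ : ℝ, ρ = Real.exp (θ * (((a + δ : ℕ) : ℝ) ^ β - (a : ℝ) ^ β)) :=
    ⟨_, rfl⟩
  have hρpos : 0 < ρ := by rw [hρ_def]; exact Real.exp_pos _
  have hSdSa : ∀ j, Sd j = ρ * Sa (j + δ) := by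
    intro j
    simp only [hSd_def, hρ_def, hSa_def]
    rw [← Real.exp_add]
    congr 1
    have hc1 : ((a + δ : ℕ) : ℝ) + (j : ℝ) = (a : ℝ) + ((j + δ : ℕ) : ℝ) := by
      push_cast; ring
    rw [hc1]; ring
  -- cost pieces
  obtain ⟨φ, hφ_def⟩ : ∃ φ : ℕ → ℝ, φ = fun k : ℕ => g + ((T : ℝ) - ((s : ℝ) + (k : ℝ))) * c :=
    ⟨_, rfl⟩
  obtain ⟨φd, hφd_def⟩ : ∃ φd : ℕ → ℝ,
      φd = fun k : ℕ => g + ((T : ℝ) - (((s : ℝ) + (δ : ℝ)) + (k : ℝ))) * c := ⟨_, rfl⟩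
  obtain ⟨C, hC_def⟩ : ∃ C : ℝ, C = ∑ k ∈ Finset.Ioc 0 δ, φ k * (Sa (k - 1) - Sa k) := ⟨_, rfl⟩
  -- formulas for fa
  have hfaT : ∀ t : ℕ, s + 1 ≤ t → t ≤ T →
      fa t = (∑ k ∈ Finset.Ioc 0 (t - s), φ k * (Sa (k - 1) - Sa k))
        + (h + ((t : ℝ) - (s : ℝ) + (a : ℝ)) * m + ((T : ℝ) - (t : ℝ)) * c) * Sa (t - s) := by
    intro t ht1 ht2
    rw [hfa t]
    have hpt : ∀ ω, Qa t ((s : ℝ) + (La ω : ℝ))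
        = if La ω ≤ t - s then φ (La ω)
          else h + ((t : ℝ) - (s : ℝ) + (a : ℝ)) * m + ((T : ℝ) - (t : ℝ)) * c := by
      intro ω
      rw [hQa t ht1 ht2]
      by_cases hcond : La ω ≤ t - s
      · have h1 : s + La ω ≤ t := by omega
        have h2 : ((s + La ω : ℕ) : ℝ) ≤ (t : ℝ) := Nat.cast_le.mpr h1
        push_cast at h2
        rw [if_pos h2, if_pos hcond]
        simp only [hφ_def]
      · have h1 : t < s + La ω := by omega
        have h2 : (t : ℝ) < ((s + La ω : ℕ) : ℝ) := Nat.cast_lt.mpr h1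
        push_cast at h2
        rw [if_neg (by linarith), if_neg hcond]
    simp only [hpt]
    exact prop2_integral_cut La hmeasLa hposLa Sa hSa φ _ (t - s)
  have hfaT1 : fa (T + 1)
      = (∑ k ∈ Finset.Ioc 0 (T - s), φ k * (Sa (k - 1) - Sa k)) + 0 * Sa (T - s) := by
    rw [hfa (T + 1)]
    have hpt : ∀ ω, Qa (T + 1) ((s : ℝ) + (La ω : ℝ))
        = if La ω ≤ T - s then φ (La ω) else 0 := by
      intro ω
      rw [hQa']
      by_cases hcond : La ω ≤ T - s
      · have h1 : s + La ω ≤ T := by omega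
        have h2 : ((s + La ω : ℕ) : ℝ) ≤ (T : ℝ) := Nat.cast_le.mpr h1
        push_cast at h2
        rw [if_pos h2, if_pos hcond]
        simp only [hφ_def]
      · have h1 : T < s + La ω := by omega
        have h2 : (T : ℝ) < ((s + La ω : ℕ) : ℝ) := Nat.cast_lt.mpr h1
        push_cast at h2
        rw [if_neg (by linarith), if_neg hcond]
    simp only [hpt]
    exact prop2_integral_cut La hmeasLa hposLa Sa hSa φ _ (T - s)
  -- formulas for fd
  have hfdT : ∀ t : ℕ, s + δ + 1 ≤ t → t ≤ T →
      fd t = (∑ k ∈ Finset.Ioc 0 (t - s - δ), φd k * (Sd (k - 1) - Sd k))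
        + (h + ((t : ℝ) - ((s : ℝ) + (δ : ℝ)) + ((a : ℝ) + (δ : ℝ))) * m
            + ((T : ℝ) - (t : ℝ)) * c) * Sd (t - s - δ) := by
    intro t ht1 ht2
    rw [hfd t]
    have hpt : ∀ ω, Qd t (((s : ℝ) + (δ : ℝ)) + (Lad ω : ℝ))
        = if Lad ω ≤ t - s - δ then φd (Lad ω)
          else h + ((t : ℝ) - ((s : ℝ) + (δ : ℝ)) + ((a : ℝ) + (δ : ℝ))) * m
            + ((T : ℝ) - (t : ℝ)) * c := by
      intro ω
      rw [hQd t ht1 ht2]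
      by_cases hcond : Lad ω ≤ t - s - δ
      · have h1 : s + δ + Lad ω ≤ t := by omega
        have h2 : ((s + δ + Lad ω : ℕ) : ℝ) ≤ (t : ℝ) := Nat.cast_le.mpr h1
        push_cast at h2
        rw [if_pos (by linarith), if_pos hcond]
        simp only [hφd_def]
      · have h1 : t < s + δ + Lad ω := by omega
        have h2 : (t : ℝ) < ((s + δ + Lad ω : ℕ) : ℝ) := Nat.cast_lt.mpr h1
        push_cast at h2
        rw [if_neg (by linarith), if_neg hcond]
    simp only [hpt]
    exact prop2_integral_cut Lad hmeasLad hposLad Sd hSd φd _ (t - s - δ)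
  have hfdT1 : fd (T + 1)
      = (∑ k ∈ Finset.Ioc 0 (T - s - δ), φd k * (Sd (k - 1) - Sd k)) + 0 * Sd (T - s - δ) := by
    rw [hfd (T + 1)]
    have hpt : ∀ ω, Qd (T + 1) (((s : ℝ) + (δ : ℝ)) + (Lad ω : ℝ))
        = if Lad ω ≤ T - s - δ then φd (Lad ω) else 0 := by
      intro ω
      rw [hQd']
      by_cases hcond : Lad ω ≤ T - s - δ
      · have h1 : s + δ + Lad ω ≤ T := by omega
        have h2 : ((s + δ + Lad ω : ℕ) : ℝ) ≤ (T : ℝ) := Nat.cast_le.mpr h1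
        push_cast at h2
        rw [if_pos (by linarith), if_pos hcond]
        simp only [hφd_def]
      · have h1 : T < s + δ + Lad ω := by omega
        have h2 : (T : ℝ) < ((s + δ + Lad ω : ℕ) : ℝ) := Nat.cast_lt.mpr h1
        push_cast at h2
        rw [if_neg (by linarith), if_neg hcond]
    simp only [hpt]
    exact prop2_integral_cut Lad hmeasLad hposLad Sd hSd φd _ (T - s - δ)
  -- algebraic bridging identity
  have hAlg : ∀ (n : ℕ) (Kv : ℝ), δ ≤ n →
      (∑ k ∈ Finset.Ioc 0 (n - δ), φd k * (Sd (k - 1) - Sd k)) + Kv * Sd (n - δ)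
      = ρ * (((∑ k ∈ Finset.Ioc 0 n, φ k * (Sa (k - 1) - Sa k)) + Kv * Sa n) - C) := by
    intro n Kv hδn
    have hSd_n : Sd (n - δ) = ρ * Sa n := by
      rw [hSdSa (n - δ)]
      congr 2
      omega
    have hterm : ∀ k ∈ Finset.Ioc 0 (n - δ),
        φd k * (Sd (k - 1) - Sd k)
          = ρ * (φ (k + δ) * (Sa ((k + δ) - 1) - Sa (k + δ))) := by
      intro k hk
      rw [Finset.mem_Ioc] at hk
      have hφeq : φd k = φ (k + δ) := by
        rw [hφd_def, hφ_def]
        have : ((s : ℝ) + (δ : ℝ)) + (k : ℝ) = (s : ℝ) + ((k + δ : ℕ) : ℝ) := by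
          push_cast; ring
        simp only [this]
      have hSd1 : Sd (k - 1) = ρ * Sa ((k + δ) - 1) := by
        rw [hSdSa (k - 1)]
        congr 2
        omega
      rw [hφeq, hSd1, hSdSa k]
      ring
    rw [Finset.sum_congr rfl hterm]
    have hmap : ∑ k ∈ Finset.Ioc 0 (n - δ),
          ρ * (φ (k + δ) * (Sa ((k + δ) - 1) - Sa (k + δ)))
        = ∑ k ∈ Finset.Ioc δ n, ρ * (φ k * (Sa (k - 1) - Sa k)) := by
      have hIoc : Finset.Ioc δ n = (Finset.Ioc 0 (n - δ)).map (addRightEmbedding δ) := by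
        rw [Finset.map_add_right_Ioc]
        congr 1
        · omega
        · omega
      rw [hIoc, Finset.sum_map]
      simp only [addRightEmbedding_apply]
    rw [hmap]
    have hsplit : ∑ k ∈ Finset.Ioc 0 n, φ k * (Sa (k - 1) - Sa k)
        = C + ∑ k ∈ Finset.Ioc δ n, φ k * (Sa (k - 1) - Sa k) := by
      rw [hC_def, ← Finset.sum_union]
      · congr 1
        rw [Finset.Ioc_union_Ioc_eq_Ioc (Nat.zero_le δ) hδn]
      · rw [Finset.disjoint_left]
        intro x hx hx'
        rw [Finset.mem_Ioc] at hx hx'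
        omega
    rw [hsplit, hSd_n, ← Finset.mul_sum]
    ring
  -- combine
  have hbridge : ∀ t : ℕ, s + δ + 1 ≤ t → t ≤ T + 1 → fd t = ρ * (fa t - C) := by
    intro t ht1 ht2
    by_cases htT : t ≤ T
    · rw [hfdT t ht1 htT, hfaT t (by omega) htT]
      have hn : t - s - δ = (t - s) - δ := by omega
      have hKeq : h + ((t : ℝ) - ((s : ℝ) + (δ : ℝ)) + ((a : ℝ) + (δ : ℝ))) * m
          = h + ((t : ℝ) - (s : ℝ) + (a : ℝ)) * m := by ring
      rw [hn]
      have := hAlg (t - s) (h + ((t : ℝ) - (s : ℝ) + (a : ℝ)) * m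
        + ((T : ℝ) - (t : ℝ)) * c) (by omega)
      rw [← this]
      have harg : h + ((t : ℝ) - ((s : ℝ) + (δ : ℝ)) + ((a : ℝ) + (δ : ℝ))) * m
            + ((T : ℝ) - (t : ℝ)) * c
          = h + ((t : ℝ) - (s : ℝ) + (a : ℝ)) * m + ((T : ℝ) - (t : ℝ)) * c := by ring
      rw [harg]
    · have ht : t = T + 1 := by omega
      subst ht
      rw [hfdT1, hfaT1]
      exact hAlg (T - s) 0 (by omega)
  intro t ht1 ht2
  rw [hbridge tstar (by omega) (by omega), hbridge t ht1 ht2]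
  have hle : fa tstar ≤ fa t := hmin t (by omega) ht2
  have := mul_le_mul_of_nonneg_left (sub_le_sub_right hle C) hρpos.le
  linarith
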